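/- Let H be a submonoid of ℕ^k with H ≠ {0}, and let X ⊆ {1,…,k} be independent over H. Then ind (H|X) = |X|; that is, whenever the |X|-monoid H|X is isomorphic as an additive monoid to a submonoid of ℕ^r with r ≥ 1, one has r ≥ |X|. -/

import Mathlib

def coordFn {k : ℕ} (A : Set (Fin k → ℕ)) (i : Fin k) : A → ℚ :=
  fun f => ((f : Fin k → ℕ) i : ℚ)

def IndepOver {k : ℕ} (X : Finset (Fin k)) (A : Set (Fin k → ℕ)) : Prop :=
  LinearIndependent ℚ (fun i : X => coordFn A i.1)

def MaxIndepOver {k : ℕ} (X : Finset (Fin k)) (A : Set (Fin k → ℕ)) : Prop :=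
  IndepOver X A ∧ ∀ Y : Finset (Fin k), X ⊂ Y → ¬ IndepOver Y A

open Pointwise in
def beta {k : ℕ} (H : AddSubmonoid (Fin k → ℕ)) : Set (Fin k → ℕ) :=
  ((H : Set (Fin k → ℕ)) \ {0}) \
    (((H : Set (Fin k → ℕ)) \ {0}) + ((H : Set (Fin k → ℕ)) \ {0}))

def restrictHom {k : ℕ} (X : Finset (Fin k)) : (Fin k → ℕ) →+ (Fin X.card → ℕ) where
  toFun h := fun j => h (X.orderIsoOfFin rfl j).1
  map_zero' := rfl
  map_add' _ _ := rfl

def IsoToSub {k : ℕ} (H : AddSubmonoid (Fin k → ℕ)) (r : ℕ) : Prop :=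
  ∃ K : AddSubmonoid (Fin r → ℕ), Nonempty (H ≃+ K)

noncomputable def indOf {k : ℕ} (H : AddSubmonoid (Fin k → ℕ)) : ℕ :=
  sInf {r : ℕ | 1 ≤ r ∧ IsoToSub H r}



def qcast (n : ℕ) : (Fin n → ℕ) →+ (Fin n → ℚ) where
  toFun f := fun j => (f j : ℚ)
  map_zero' := by funext j; simp
  map_add' a b := by funext j; simp [Nat.cast_add]

lemma qcast_injective (n : ℕ) : Function.Injective (qcast n) := by
  intro a b h
  funext j
  have := congrFun h j
  simpa [qcast] using this

lemma hom_sum_nsmul {ι A B : Type*} [AddCommMonoid A] [AddCommMonoid B] (f : A →+ B)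
    (s : Finset ι) (a : ι → ℕ) (x : ι → A) :
    f (∑ i ∈ s, a i • x i) = ∑ i ∈ s, a i • f (x i) := by
  rw [map_sum]
  exact Finset.sum_congr rfl fun i _ => f.map_nsmul _ _

lemma key_le {n r : ℕ} (M : AddSubmonoid (Fin n → ℕ))
    (hg : LinearIndependent ℚ (fun (j : Fin n) (m : M) => ((m : Fin n → ℕ) j : ℚ)))
    (K : AddSubmonoid (Fin r → ℕ)) (φ : M ≃+ K) : n ≤ r := by
  classical
  set e : M →+ (Fin n → ℚ) := (qcast n).comp M.subtype with he
  have he_apply : ∀ (m : M) (j : Fin n), e m j = ((m : Fin n → ℕ) j : ℚ) := fun m j => rfl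
  -- Step 1: span of range e is ⊤
  have hspan : Submodule.span ℚ (Set.range fun m : M => e m) = ⊤ := by
    by_contra hne
    obtain ⟨f, hf0, hfbot⟩ := Submodule.exists_dual_map_eq_bot_of_lt_top
      (p := Submodule.span ℚ (Set.range fun m : M => e m)) (lt_top_iff_ne_top.mpr hne)
      inferInstance
    set c : Fin n → ℚ := fun j => f (fun j' => if j = j' then 1 else 0) with hc
    have hfx : ∀ x : Fin n → ℚ, f x = ∑ j, x j * c j := by
      intro x
      rw [LinearMap.pi_apply_eq_sum_univ f x]
      simp [hc, smul_eq_mul]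
    have hzero : ∀ m : M, ∑ j, (↑((m : Fin n → ℕ) j) : ℚ) * c j = 0 := by
      intro m
      have hmem : e m ∈ Submodule.span ℚ (Set.range fun m : M => e m) :=
        Submodule.subset_span ⟨m, rfl⟩
      have : f (e m) ∈ (Submodule.span ℚ (Set.range fun m : M => e m)).map f :=
        Submodule.mem_map_of_mem hmem
      rw [hfbot, Submodule.mem_bot] at this
      rw [← this, hfx (e m)]
      rfl
    have hcz : c = 0 := by
      have := Fintype.linearIndependent_iff.mp hg c ?_
      · funext j; exact this j
      · funext m
        simp only [Finset.sum_apply, Pi.smul_apply, smul_eq_mul, Pi.zero_apply]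
        rw [← hzero m]
        exact Finset.sum_congr rfl fun j _ => mul_comm _ _
    apply hf0
    refine LinearMap.ext fun x => ?_
    rw [hfx x, hcz]
    simp
  -- Step 2: extract a basis from the spanning set
  obtain ⟨b, hbsub, hbspan, hbind⟩ := exists_linearIndependent ℚ (Set.range fun m : M => e m)
  rw [hspan] at hbspan
  let B : Module.Basis b ℚ (Fin n → ℚ) := Module.Basis.mk hbind (by rw [Subtype.range_coe]; exact hbspan.ge)
  let eqv : b ≃ Fin n := B.indexEquiv (Pi.basisFun ℚ (Fin n))
  let v : Fin n → (Fin n → ℚ) := fun j => ((eqv.symm j : b) : Fin n → ℚ)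
  have hv : LinearIndependent ℚ v := by
    have h1 := (B.reindex eqv).linearIndependent
    have h2 : ⇑(B.reindex eqv) = v := by
      funext j
      simp [B, v, Module.Basis.reindex_apply, Module.Basis.mk_apply]
    rwa [h2] at h1
  have hvZ : LinearIndependent ℤ v := (LinearIndependent.iff_fractionRing ℤ ℚ).mpr hv
  -- choose preimages
  have hmemv : ∀ j, ∃ m : M, e m = v j := fun j => hbsub (eqv.symm j).2
  choose m hm using hmemv
  -- Step 3: images are independent
  set eK : K →+ (Fin r → ℚ) := (qcast r).comp K.subtype with heK
  have heK_inj : Function.Injective eK := by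
    intro a b h
    exact Subtype.ext (qcast_injective r h)
  let w : Fin n → (Fin r → ℚ) := fun j => eK (φ (m j))
  have hwZ : LinearIndependent ℤ w := by
    rw [Fintype.linearIndependent_iff]
    intro z hz j
    set a : Fin n → ℕ := fun j => (z j).toNat with ha
    set bb : Fin n → ℕ := fun j => (-z j).toNat with hbb
    have hzab : ∀ j, ((a j : ℤ)) - (bb j : ℤ) = z j := fun j => Int.toNat_sub_toNat_neg (z j)
    have hQ : ∑ i, a i • w i = ∑ i, bb i • w i := by
      have : ∑ i, ((a i : ℤ) • w i - (bb i : ℤ) • w i) = 0 := by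
        rw [← hz]
        refine Finset.sum_congr rfl fun i _ => ?_
        rw [← sub_smul, hzab i]
      rw [Finset.sum_sub_distrib, sub_eq_zero] at this
      simpa [natCast_zsmul] using this
    -- transfer to K
    have hK : (∑ i, a i • φ (m i)) = ∑ i, bb i • φ (m i) := by
      apply heK_inj
      rw [hom_sum_nsmul, hom_sum_nsmul]
      exact hQ
    -- transfer to M
    have hM : (∑ i, a i • m i) = ∑ i, bb i • m i := by
      apply φ.injective
      have e1 := hom_sum_nsmul φ.toAddMonoidHom Finset.univ a m
      have e2 := hom_sum_nsmul φ.toAddMonoidHom Finset.univ bb m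
      simp only [AddEquiv.coe_toAddMonoidHom] at e1 e2
      rw [e1, e2]
      exact hK
    -- transfer to v
    have hV : ∑ i, a i • v i = ∑ i, bb i • v i := by
      have h1 := congrArg e hM
      rw [hom_sum_nsmul, hom_sum_nsmul] at h1
      simpa [hm] using h1
    have hzv : ∑ i, z i • v i = 0 := by
      have hs : ∑ i, ((a i : ℤ) • v i - (bb i : ℤ) • v i) = 0 := by
        rw [Finset.sum_sub_distrib, sub_eq_zero]
        simpa [natCast_zsmul] using hV
      rw [← hs]
      exact Finset.sum_congr rfl fun i _ => by rw [← sub_smul, hzab i]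
    exact Fintype.linearIndependent_iff.mp hvZ z hzv j
  have hwQ : LinearIndependent ℚ w := (LinearIndependent.iff_fractionRing ℤ ℚ).mp hwZ
  have := hwQ.fintype_card_le_finrank
  simpa using this

theorem statement10 {k : ℕ} (hk : 0 < k) (H : AddSubmonoid (Fin k → ℕ)) (hH : H ≠ ⊥)
    (X : Finset (Fin k)) (hX : X.Nonempty)
    (hind : IndepOver X (H : Set (Fin k → ℕ))) :
    indOf (AddSubmonoid.map (restrictHom X) H) = X.card := by
  classical
  set M := AddSubmonoid.map (restrictHom X) H with hMdef
  have hind' : LinearIndependent ℚ (fun i : X => coordFn (H : Set (Fin k → ℕ)) i.1) := hind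
  have hg : LinearIndependent ℚ
      (fun (j : Fin X.card) (m : M) => ((m : Fin X.card → ℕ) j : ℚ)) := by
    rw [Fintype.linearIndependent_iff]
    intro c hc j
    set σ := X.orderIsoOfFin rfl with hσ
    set c' : X → ℚ := fun i => c (σ.symm i) with hc'
    have h0 : ∀ i : X, c' i = 0 := by
      apply Fintype.linearIndependent_iff.mp hind' c'
      funext h
      simp only [Finset.sum_apply, Pi.smul_apply, smul_eq_mul, Pi.zero_apply]
      have hmem : restrictHom X (h : Fin k → ℕ) ∈ M := ⟨(h : Fin k → ℕ), h.2, rfl⟩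
      have hcm := congrFun hc ⟨restrictHom X (h : Fin k → ℕ), hmem⟩
      simp only [Finset.sum_apply, Pi.smul_apply, smul_eq_mul, Pi.zero_apply] at hcm
      rw [← Equiv.sum_comp σ.toEquiv (fun i : X => c' i * coordFn (H : Set (Fin k → ℕ)) i.1 h)]
      rw [← hcm]
      refine Finset.sum_congr rfl fun i _ => ?_
      simp only [hc', OrderIso.symm_apply_apply, coordFn, RelIso.coe_fn_toEquiv]
      rfl
    have := h0 (σ j)
    simpa [hc'] using this
  have hmem : X.card ∈ {r : ℕ | 1 ≤ r ∧ IsoToSub M r} :=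
    ⟨hX.card_pos, M, ⟨AddEquiv.refl M⟩⟩
  refine le_antisymm (Nat.sInf_le hmem) (le_csInf ⟨X.card, hmem⟩ ?_)
  rintro r ⟨hr1, K, ⟨ψ⟩⟩
  exact key_le M hg K ψ
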